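/- Let G = (V, E, w) be a weighted digraph with a laminar topological order (<_D, 𝒫), enumerate V as v₁ <_D v₂ <_D … <_D v_n, and let H be a 2-hop spanner with respect to this enumeration. Let D₁ be a weighted digraph on V that contains, for every (v_i, v_j) ∈ H with v_i ⇝_G v_j, the edge (v_i, v_j) with weight d_G(v_i, v_j), and let D₂ be a weighted digraph on V that contains, for every (v_i, v_j) ∈ H with v_j ⇝_G v_i, the edge (v_j, v_i) with weight d_G(v_j, v_i). For s, t ∈ V define α(s, t) := d_{D₁}(s, t) if s = t or s <_D t, and α(s, t) := 3·Δ_{s,t} otherwise. Then for all s, t ∈ V: (i) if s = t or s <_D t then d_{D₁}(s, t) ≤ α(s, t), and if s = t or t <_D s then d_{D₂}(s, t) ≤ α(s, t); and (ii) if s and t both belong to some cluster C ∈ 𝒫 whose weak diameter satisfies Δ_C ≤ Δ, then α(s, t) ≤ 3Δ. -/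

import Mathlib

open scoped ENNReal BigOperators

/-- A weighted digraph: edges `E` with no self-loops and positive real weights. -/
structure WDigraph (V : Type) where
  E : V → V → Prop
  no_self : ∀ v : V, ¬ E v v
  w : V → V → ℝ
  w_pos : ∀ u v : V, E u v → 0 < w u v

namespace WDigraph

variable {V : Type}

/-- `PathW G u v c`: there is a directed path from `u` to `v` in `G` of total weight `c`. -/
inductive PathW (G : WDigraph V) : V → V → ℝ → Prop
  | nil (u : V) : PathW G u u 0
  | cons {u x v : V} {c : ℝ} : G.E u x → PathW G x v c → PathW G u v (G.w u x + c)

/-- `u ⇝_G v`: there is a directed path from `u` to `v`. -/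
def Reach (G : WDigraph V) (u v : V) : Prop := Relation.ReflTransGen G.E u v

/-- The shortest-path quasimetric: infimum of path weights, `∞` if no path exists. -/
noncomputable def dist (G : WDigraph V) (u v : V) : ℝ≥0∞ :=
  ⨅ (c : ℝ) (_ : G.PathW u v c), ENNReal.ofReal c

/-- A DAG: no vertex has a nonempty directed path to itself. -/
def IsDAG (G : WDigraph V) : Prop := ∀ v : V, ¬ Relation.TransGen G.E v v

/-- Number of edges of the digraph. -/
noncomputable def edgeCount (G : WDigraph V) : ℕ := Nat.card {p : V × V // G.E p.1 p.2}

end WDigraph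

namespace WDigraph

variable {V : Type}

lemma PathW.append {G : WDigraph V} {u x v : V} {a b : ℝ}
    (h1 : G.PathW u x a) (h2 : G.PathW x v b) : G.PathW u v (a + b) := by
  induction h1 with
  | nil => simpa using h2
  | cons e _ ih => rw [add_assoc]; exact .cons e (ih h2)

lemma dist_le_path {G : WDigraph V} {u v : V} {c : ℝ} (h : G.PathW u v c) :
    G.dist u v ≤ ENNReal.ofReal c := iInf₂_le c h

lemma dist_self (G : WDigraph V) (u : V) : G.dist u u = 0 :=
  le_antisymm (by simpa using dist_le_path (PathW.nil (G := G) u)) zero_le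

lemma dist_le_edge {G : WDigraph V} {u v : V} (h : G.E u v) :
    G.dist u v ≤ ENNReal.ofReal (G.w u v) := by
  simpa using dist_le_path (PathW.cons h (PathW.nil v))

lemma dist_triangle (G : WDigraph V) (u x v : V) :
    G.dist u v ≤ G.dist u x + G.dist x v := by
  unfold dist
  rw [ENNReal.iInf_add]
  refine le_iInf fun a => ?_
  rw [ENNReal.iInf_add]
  refine le_iInf fun ha => ?_
  rw [ENNReal.add_iInf]
  refine le_iInf fun b => ?_
  rw [ENNReal.add_iInf]
  refine le_iInf fun hb => ?_
  exact le_trans (dist_le_path (ha.append hb)) ENNReal.ofReal_add_le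

end WDigraph

/-- A laminar topological order of a weighted digraph `G` over a linearly ordered vertex
set: a laminar family of clusters containing all singletons, each cluster being an
interval of the order and inducing a strongly connected subgraph. -/
structure LaminarTO {V : Type} [LinearOrder V] (G : WDigraph V) where
  P : Set (Set V)
  nonempty_mem : ∀ C ∈ P, C.Nonempty
  singleton_mem : ∀ v : V, ({v} : Set V) ∈ P
  laminar : ∀ C₁ ∈ P, ∀ C₂ ∈ P, C₁ ∩ C₂ = ∅ ∨ C₁ ⊆ C₂ ∨ C₂ ⊆ C₁
  interval : ∀ C ∈ P, ∀ u ∈ C, ∀ v ∈ C, ∀ x : V, u ≤ x → x ≤ v → x ∈ C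
  strongly_connected : ∀ C ∈ P, ∀ u ∈ C, ∀ v ∈ C,
    Relation.ReflTransGen (fun a b => G.E a b ∧ a ∈ C ∧ b ∈ C) u v

/-- The weak diameter `Δ_C` of a cluster `C`. -/
noncomputable def clusterDiam {V : Type} (G : WDigraph V) (C : Set V) : ℝ≥0∞ :=
  ⨆ x ∈ C, ⨆ y ∈ C, G.dist x y

/-- `Δ_{s,t}`: the weak diameter of the inclusion-minimal cluster of the laminar family
containing both `s` and `t` (by laminarity and monotonicity of the diameter this equals
the infimum below), and `∞` if no cluster contains both. -/
noncomputable def pairDiam {V : Type} [LinearOrder V] {G : WDigraph V}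
    (LP : LaminarTO G) (s t : V) : ℝ≥0∞ :=
  ⨅ (C : Set V) (_ : C ∈ LP.P) (_ : s ∈ C) (_ : t ∈ C), clusterDiam G C

/-- A 2-hop spanner of the linearly ordered vertex set: for every `u < v`, either
`(u,v) ∈ H` or some `x` with `u < x < v` satisfies `(u,x) ∈ H` and `(x,v) ∈ H`. -/
def TwoHopSpanner {V : Type} [LinearOrder V] (H : Set (V × V)) : Prop :=
  (∀ p ∈ H, p.1 < p.2) ∧
  ∀ u v : V, u < v → ((u, v) ∈ H ∨ ∃ x : V, u < x ∧ x < v ∧ (u, x) ∈ H ∧ (x, v) ∈ H)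

/-- `α(s,t) := d_{D₁}(s,t)` if `s = t` or `s <_D t`, and `α(s,t) := 3·Δ_{s,t}` otherwise. -/
noncomputable def alphaFn {V : Type} [LinearOrder V] {G : WDigraph V}
    (LP : LaminarTO G) (D₁ : WDigraph V) (s t : V) : ℝ≥0∞ :=
  if s ≤ t then D₁.dist s t else 3 * pairDiam LP s t

/-- (i) `d_{D₁}(s,t) ≤ α(s,t)` when `s ≤_D t` and `d_{D₂}(s,t) ≤ α(s,t)`
when `t ≤_D s`; (ii) if `s` and `t` lie in a common cluster of weak diameter at most `Δ`,
then `α(s,t) ≤ 3Δ`. -/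
theorem alpha_dominates {V : Type} [Fintype V] [LinearOrder V]
    (G : WDigraph V) (LP : LaminarTO G) (H : Set (V × V)) (hH : TwoHopSpanner H)
    (D₁ D₂ : WDigraph V)
    (hD₁ : ∀ p ∈ H, G.Reach p.1 p.2 →
      D₁.E p.1 p.2 ∧ ENNReal.ofReal (D₁.w p.1 p.2) = G.dist p.1 p.2)
    (hD₂ : ∀ p ∈ H, G.Reach p.2 p.1 →
      D₂.E p.2 p.1 ∧ ENNReal.ofReal (D₂.w p.2 p.1) = G.dist p.2 p.1) :
    ∀ s t : V,
      ((s ≤ t → D₁.dist s t ≤ alphaFn LP D₁ s t) ∧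
        (t ≤ s → D₂.dist s t ≤ alphaFn LP D₁ s t)) ∧
      (∀ C ∈ LP.P, s ∈ C → t ∈ C → ∀ Δ : ℝ≥0∞, clusterDiam G C ≤ Δ →
        alphaFn LP D₁ s t ≤ 3 * Δ) := by
  intro s t
  have reachC : ∀ C ∈ LP.P, ∀ u ∈ C, ∀ v ∈ C, G.Reach u v := fun C hC u hu v hv =>
    Relation.ReflTransGen.mono (r := fun a b => G.E a b ∧ a ∈ C ∧ b ∈ C) (p := G.E)
      (fun a b h => h.1) u v (LP.strongly_connected C hC u hu v hv)
  have distC : ∀ C ∈ LP.P, ∀ u ∈ C, ∀ v ∈ C, G.dist u v ≤ clusterDiam G C := by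
    intro C hC u hu v hv
    exact le_iSup₂_of_le u hu (le_iSup₂_of_le v hv le_rfl)
  have two_le_three : ∀ a b : ℝ≥0∞, a ≤ b → a + a ≤ 3 * b := by
    intro a b hab
    calc a + a ≤ b + b := add_le_add hab hab
      _ ≤ 3 * b := by
        rw [show (3 : ℝ≥0∞) = 2 + 1 by norm_num, add_mul, one_mul, two_mul]
        exact le_add_right le_rfl
  have key1 : ∀ C ∈ LP.P, s ∈ C → t ∈ C → s < t →
      D₁.dist s t ≤ clusterDiam G C + clusterDiam G C := by
    intro C hC hs ht hst
    rcases hH.2 s t hst with h | ⟨x, hsx, hxt, h1, h2⟩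
    · obtain ⟨he, hw⟩ := hD₁ (s, t) h (reachC C hC s hs t ht)
      calc D₁.dist s t ≤ ENNReal.ofReal (D₁.w s t) := WDigraph.dist_le_edge he
        _ = G.dist s t := hw
        _ ≤ clusterDiam G C := distC C hC s hs t ht
        _ ≤ _ := le_add_self
    · have hx : x ∈ C := LP.interval C hC s hs t ht x hsx.le hxt.le
      obtain ⟨he1, hw1⟩ := hD₁ (s, x) h1 (reachC C hC s hs x hx)
      obtain ⟨he2, hw2⟩ := hD₁ (x, t) h2 (reachC C hC x hx t ht)
      calc D₁.dist s t ≤ D₁.dist s x + D₁.dist x t := D₁.dist_triangle s x t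
        _ ≤ ENNReal.ofReal (D₁.w s x) + ENNReal.ofReal (D₁.w x t) :=
            add_le_add (WDigraph.dist_le_edge he1) (WDigraph.dist_le_edge he2)
        _ = G.dist s x + G.dist x t := by rw [hw1, hw2]
        _ ≤ _ := add_le_add (distC C hC s hs x hx) (distC C hC x hx t ht)
  have key2 : ∀ C ∈ LP.P, s ∈ C → t ∈ C → t < s →
      D₂.dist s t ≤ clusterDiam G C + clusterDiam G C := by
    intro C hC hs ht hts
    rcases hH.2 t s hts with h | ⟨x, htx, hxs, h1, h2⟩
    · obtain ⟨he, hw⟩ := hD₂ (t, s) h (reachC C hC s hs t ht)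
      calc D₂.dist s t ≤ ENNReal.ofReal (D₂.w s t) := WDigraph.dist_le_edge he
        _ = G.dist s t := hw
        _ ≤ clusterDiam G C := distC C hC s hs t ht
        _ ≤ _ := le_add_self
    · have hx : x ∈ C := LP.interval C hC t ht s hs x htx.le hxs.le
      obtain ⟨he1, hw1⟩ := hD₂ (x, s) h2 (reachC C hC s hs x hx)
      obtain ⟨he2, hw2⟩ := hD₂ (t, x) h1 (reachC C hC x hx t ht)
      calc D₂.dist s t ≤ D₂.dist s x + D₂.dist x t := D₂.dist_triangle s x t
        _ ≤ ENNReal.ofReal (D₂.w s x) + ENNReal.ofReal (D₂.w x t) :=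
            add_le_add (WDigraph.dist_le_edge he1) (WDigraph.dist_le_edge he2)
        _ = G.dist s x + G.dist x t := by rw [hw1, hw2]
        _ ≤ _ := add_le_add (distC C hC s hs x hx) (distC C hC x hx t ht)
  refine ⟨⟨fun hst => ?_, fun hts => ?_⟩, fun C hC hs ht Δ hΔ => ?_⟩
  · rw [alphaFn, if_pos hst]
  · rcases eq_or_lt_of_le hts with heq | hlt
    · rw [heq, WDigraph.dist_self]
      exact zero_le
    · rw [alphaFn, if_neg (not_le.2 hlt), pairDiam]
      simp only [ENNReal.mul_iInf_of_ne (by norm_num : (3 : ℝ≥0∞) ≠ 0)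
        (by norm_num : (3 : ℝ≥0∞) ≠ ⊤)]
      refine le_iInf fun C => le_iInf fun hC => le_iInf fun hs => le_iInf fun ht => ?_
      exact (key2 C hC hs ht hlt).trans (two_le_three _ _ le_rfl)
  · rw [alphaFn]
    split_ifs with hle
    · rcases eq_or_lt_of_le hle with heq | hlt
      · rw [heq, WDigraph.dist_self]
        exact zero_le
      · exact (key1 C hC hs ht hlt).trans (two_le_three _ _ hΔ)
    · have hp : pairDiam LP s t ≤ clusterDiam G C :=
        iInf_le_of_le C (iInf_le_of_le hC (iInf_le_of_le hs (iInf_le_of_le ht le_rfl)))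
      exact mul_le_mul_right (hp.trans hΔ) 3
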